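/- For every real number α with −π/2 ≤ α ≤ π/2, the series ∑_{n≥0} (C_n / 4^n) · (sin α)^{2n+3} converges and its sum equals 2·sin α − sin(2α); equivalently, sin(2α) = 2 sin α − ∑_{n=1}^∞ (C_{n−1}/4^{n−1}) sin^{2n+1} α. (Ming Antu's identity, c. 1730s.) -/

import Mathlib

open Real Finset

noncomputable def bb (n : ℕ) : ℝ := (Nat.centralBinom n : ℝ) / 4 ^ n

lemma bb_pos (n : ℕ) : 0 < bb n := by
  have := Nat.centralBinom_pos n
  have h : (0:ℝ) < Nat.centralBinom n := by exact_mod_cast this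
  exact div_pos h (by positivity)

lemma bb_zero : bb 0 = 1 := by simp [bb, Nat.centralBinom]

lemma bb_succ (n : ℕ) : bb (n + 1) = bb n * ((2 * n + 1) / (2 * n + 2)) := by
  have h2 : ((n:ℝ) + 1) * Nat.centralBinom (n + 1) = 2 * (2 * n + 1) * Nat.centralBinom n := by
    exact_mod_cast Nat.succ_mul_centralBinom_succ n
  have hn : ((n:ℝ) + 1) ≠ 0 := by positivity
  have h4 : (4:ℝ) ^ (n+1) ≠ 0 := by positivity
  have h4' : (4:ℝ) ^ n ≠ 0 := by positivity
  unfold bb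
  field_simp
  push_cast
  linear_combination (2*(4:ℝ)^n) * h2

lemma catalan_div (n : ℕ) : (catalan n : ℝ) / 4 ^ n = 2 * (bb n - bb (n + 1)) := by
  have h1 : ((n:ℝ) + 1) * catalan n = Nat.centralBinom n := by
    exact_mod_cast succ_mul_catalan_eq_centralBinom n
  rw [bb_succ]
  unfold bb
  have hn : ((n:ℝ) + 1) ≠ 0 := by positivity
  have h4' : (4:ℝ) ^ n ≠ 0 := by positivity
  field_simp
  linear_combination h1

lemma bb_sq_le (n : ℕ) : bb n ^ 2 * (2 * n + 1) ≤ 1 := by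
  induction n with
  | zero => simp [bb_zero]
  | succ n ih =>
    rw [bb_succ]
    have h := bb_pos n
    have hd : (0:ℝ) < 2 * n + 2 := by positivity
    push_cast
    rw [mul_pow, div_pow]
    have hd2 : (0:ℝ) < (2 * n + 2) ^ 2 := by positivity
    calc bb n ^ 2 * ((2 * (n:ℝ) + 1) ^ 2 / (2 * n + 2) ^ 2) * (2 * ((n:ℝ) + 1) + 1)
        = bb n ^ 2 * ((2 * (n:ℝ) + 1) ^ 2 * (2 * ((n:ℝ) + 1) + 1)) / (2 * n + 2) ^ 2 := by ring
      _ ≤ bb n ^ 2 * ((2 * (n:ℝ) + 1) * (2 * n + 2) ^ 2) / (2 * n + 2) ^ 2 := by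
          gcongr bb n ^ 2 * ?_ / _
          nlinarith [sq_nonneg ((n:ℝ))]
      _ = bb n ^ 2 * (2 * n + 1) := by field_simp
      _ ≤ 1 := ih

lemma bb_tendsto : Filter.Tendsto bb Filter.atTop (nhds 0) := by
  have hle : ∀ n : ℕ, bb n ≤ Real.sqrt (1 / ((n : ℝ) + 1)) := by
    intro n
    have h2 : (0:ℝ) < (n:ℝ) + 1 := by positivity
    have h1 : bb n ^ 2 ≤ 1 / ((n:ℝ) + 1) := by
      rw [le_div_iff₀ h2]
      nlinarith [sq_nonneg (bb n), bb_sq_le n]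
    calc bb n = Real.sqrt (bb n ^ 2) := (Real.sqrt_sq (bb_pos n).le).symm
      _ ≤ Real.sqrt (1 / ((n:ℝ) + 1)) := Real.sqrt_le_sqrt h1
  have h0 : Filter.Tendsto (fun n : ℕ => Real.sqrt (1 / ((n:ℝ) + 1)))
      Filter.atTop (nhds 0) := by
    have h1 : Filter.Tendsto (fun n : ℕ => 1 / ((n:ℝ) + 1)) Filter.atTop (nhds 0) :=
      tendsto_one_div_add_atTop_nhds_zero_nat
    exact (Real.continuous_sqrt.tendsto' 0 0 Real.sqrt_zero).comp h1
  exact squeeze_zero (fun n => (bb_pos n).le) hle h0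

lemma hasSum_catalan_div : HasSum (fun n : ℕ => (catalan n : ℝ) / 4 ^ n) 2 := by
  rw [hasSum_iff_tendsto_nat_of_nonneg (fun n => by positivity)]
  have key : ∀ N : ℕ, ∑ n ∈ Finset.range N, (catalan n : ℝ) / 4 ^ n = 2 * (bb 0 - bb N) := by
    intro N
    simp_rw [catalan_div, ← Finset.mul_sum, Finset.sum_range_sub' bb]
  simp_rw [key, bb_zero]
  have h2 : Filter.Tendsto (fun n : ℕ => 2 * ((1:ℝ) - bb n)) Filter.atTop (nhds (2 * (1 - 0))) :=
    (tendsto_const_nhds.sub bb_tendsto).const_mul 2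
  simpa using h2

lemma hasSum_gen {y : ℝ} (hy0 : 0 < y) (hy1 : y ≤ 1) :
    HasSum (fun n : ℕ => (catalan n : ℝ) / 4 ^ n * y ^ n)
      ((2 - 2 * Real.sqrt (1 - y)) / y) := by
  set u : ℕ → ℝ := fun n => (catalan n : ℝ) / 4 ^ n * y ^ n with hu
  have hun : ∀ n, 0 ≤ u n := fun n => by
    have : (0:ℝ) ≤ y := hy0.le
    positivity
  have hub : ∀ n, u n ≤ (catalan n : ℝ) / 4 ^ n := by
    intro n
    have h1 : y ^ n ≤ 1 := pow_le_one₀ hy0.le hy1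
    have h2 : (0:ℝ) ≤ (catalan n : ℝ) / 4 ^ n := by positivity
    calc u n ≤ (catalan n : ℝ) / 4 ^ n * 1 := mul_le_mul_of_nonneg_left h1 h2
      _ = (catalan n : ℝ) / 4 ^ n := mul_one _
  have hsum : Summable u := Summable.of_nonneg_of_le hun hub hasSum_catalan_div.summable
  set S := ∑' n, u n with hS
  have hSle : S ≤ 2 := by
    have := Summable.tsum_le_tsum hub hsum hasSum_catalan_div.summable
    rwa [hasSum_catalan_div.tsum_eq] at this
  have hS0 : 0 ≤ S := tsum_nonneg hun
  have hnorm : Summable (fun n => ‖u n‖) := by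
    simpa [Real.norm_eq_abs, abs_of_nonneg (hun _)] using hsum
  have hC : S * S = ∑' n, ∑ kl ∈ Finset.HasAntidiagonal.antidiagonal n, u kl.1 * u kl.2 :=
    tsum_mul_tsum_eq_tsum_sum_antidiagonal_of_summable_norm hnorm hnorm
  have hinner : ∀ n : ℕ, ∑ kl ∈ Finset.HasAntidiagonal.antidiagonal n, u kl.1 * u kl.2
      = (catalan (n+1) : ℝ) / 4 ^ n * y ^ n := by
    intro n
    have hcat : (catalan (n+1) : ℝ)
        = ∑ kl ∈ Finset.HasAntidiagonal.antidiagonal n, (catalan kl.1 : ℝ) * (catalan kl.2 : ℝ) := by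
      rw [catalan_succ']
      push_cast
      rfl
    rw [hcat, Finset.sum_div, Finset.sum_mul]
    apply Finset.sum_congr rfl
    intro kl hkl
    have hkl' : kl.1 + kl.2 = n := Finset.HasAntidiagonal.mem_antidiagonal.mp hkl
    simp only [hu]
    rw [← hkl', pow_add, pow_add]
    ring
  have hquad : S = 1 + y / 4 * (S * S) := by
    have h0 : u 0 = 1 := by simp [hu]
    have hstep : ∀ n : ℕ, u (n + 1) = y / 4 * ((catalan (n+1) : ℝ) / 4 ^ n * y ^ n) := by
      intro n
      simp only [hu]
      rw [pow_succ, pow_succ]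
      ring
    have htail : (∑' n, u (n + 1)) = y / 4 * (S * S) := by
      rw [tsum_congr hstep, tsum_mul_left, hC, tsum_congr hinner]
    have h3 := Summable.tsum_eq_zero_add hsum
    rw [h0, htail] at h3
    exact h3
  set c := Real.sqrt (1 - y) with hc
  have hc0 : 0 ≤ c := Real.sqrt_nonneg _
  have hc2 : c ^ 2 = 1 - y := Real.sq_sqrt (by linarith)
  have hkey : (y * S - 2) ^ 2 = (2 * c) ^ 2 := by
    rw [mul_pow, hc2]
    linear_combination (-4 * y) * hquad
  have habs : |y * S - 2| = |2 * c| := by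
    rw [← Real.sqrt_sq_eq_abs, ← Real.sqrt_sq_eq_abs, hkey]
  have hyS : y * S = 2 - 2 * c := by
    rcases abs_eq_abs.mp habs with h | h
    · have hyS2 : y * S ≤ 2 := by nlinarith
      have : c = 0 := by nlinarith
      rw [this] at h ⊢
      linarith
    · linarith
  have : S = (2 - 2 * c) / y := by
    rw [eq_div_iff hy0.ne']
    linarith [hyS]
  rw [← this]
  exact hsum.hasSum

/-- Ming Antu's identity (c. 1730s): for `−π/2 ≤ α ≤ π/2`,
`∑_{n≥0} (Cₙ/4ⁿ)·(sin α)^{2n+3} = 2·sin α − sin(2α)`. -/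
theorem mingantu (α : ℝ) (h1 : -(π / 2) ≤ α) (h2 : α ≤ π / 2) :
    HasSum (fun n : ℕ => (catalan n : ℝ) / 4 ^ n * Real.sin α ^ (2 * n + 3))
      (2 * Real.sin α - Real.sin (2 * α)) := by
  have hcos : Real.cos α = Real.sqrt (1 - Real.sin α ^ 2) :=
    Real.cos_eq_sqrt_one_sub_sin_sq h1 h2
  rw [Real.sin_two_mul]
  by_cases hx : Real.sin α = 0
  · have hz : (fun n : ℕ => (catalan n : ℝ) / 4 ^ n * Real.sin α ^ (2 * n + 3))
        = fun _ : ℕ => (0:ℝ) := by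
      funext n; rw [hx]; simp
    rw [hz, hx]
    simpa using hasSum_zero
  · set x := Real.sin α with hxdef
    have hy0 : 0 < x ^ 2 := by positivity
    have hy1 : x ^ 2 ≤ 1 := by
      nlinarith [Real.sin_le_one α, Real.neg_one_le_sin α]
    have h := (hasSum_gen hy0 hy1).mul_left (x ^ 3)
    have hfun : (fun n : ℕ => x ^ 3 * ((catalan n : ℝ) / 4 ^ n * (x ^ 2) ^ n))
        = fun n : ℕ => (catalan n : ℝ) / 4 ^ n * x ^ (2 * n + 3) := by
      funext n
      rw [← pow_mul]
      ring
    have hval : x ^ 3 * ((2 - 2 * Real.sqrt (1 - x ^ 2)) / x ^ 2)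
        = 2 * x - 2 * x * Real.cos α := by
      rw [hcos]
      field_simp
      try ring
    rw [hfun, hval] at h
    exact h
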